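/- Let (Γ, v) be a rooted graph with the unique simple path property and let w be a vertex. Then the full subgraph w↑ on the set of vertices q from which w is reachable (including v) is rooted at v, has the unique simple path property, is quasilinear, and hence is linear. -/

import Mathlib

structure DGraph : Type 1 where
  V : Type
  E : Type
  ι : E → V
  τ : E → V

namespace DGraph

/-- A directed path from `u` to `w` given by its list of edges. -/
inductive Path (G : DGraph) : G.V → G.V → List G.E → Prop
  | nil (v : G.V) : Path G v v []
  | cons (e : G.E) {w : G.V} {p : List G.E} :
      Path G (G.τ e) w p → Path G (G.ι e) w (e :: p)

/-- The list of vertices visited by a path `p` starting at `u`. -/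
def verts (G : DGraph) (u : G.V) (p : List G.E) : List G.V :=
  u :: p.map G.τ

/-- A simple directed path: a path visiting no vertex twice. -/
def SimplePath (G : DGraph) (u w : G.V) (p : List G.E) : Prop :=
  G.Path u w p ∧ (G.verts u p).Nodup

/-- `w` is reachable from `u` by a directed path. -/
def Reach (G : DGraph) (u w : G.V) : Prop := ∃ p, G.Path u w p

/-- A graph is rooted at `v` if every vertex is reachable from `v`. -/
def Rooted (G : DGraph) (v : G.V) : Prop := ∀ w, G.Reach v w

end DGraph


namespace DGraph

variable {G : DGraph}

lemma verts_cons (u : G.V) (e : G.E) (p : List G.E) :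
    G.verts u (e :: p) = u :: G.verts (G.τ e) p := by
  simp [verts]

lemma verts_append (u : G.V) (p q : List G.E) :
    G.verts u (p ++ q) = G.verts u p ++ q.map G.τ := by
  simp [verts]

lemma Path.append {u x y : G.V} {p q : List G.E}
    (h1 : G.Path u x p) (h2 : G.Path x y q) : G.Path u y (p ++ q) := by
  induction h1 with
  | nil v => simpa using h2
  | cons e h ih => exact Path.cons e (ih h2)

lemma Reach.trans {a b c : G.V} (h1 : G.Reach a b) (h2 : G.Reach b c) :
    G.Reach a c := by
  obtain ⟨p, hp⟩ := h1; obtain ⟨q, hq⟩ := h2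
  exact ⟨p ++ q, hp.append hq⟩

lemma Reach.refl (u : G.V) : G.Reach u u := ⟨[], Path.nil u⟩

lemma reach_edge (e : G.E) : G.Reach (G.ι e) (G.τ e) :=
  ⟨[e], Path.cons e (Path.nil _)⟩

lemma Path.end_mem_verts {u b : G.V} {p : List G.E} (h : G.Path u b p) :
    b ∈ G.verts u p := by
  induction h with
  | nil v => simp [verts]
  | cons e h ih => rw [verts_cons]; exact List.mem_cons_of_mem _ ih

lemma Path.split_edge {a b : G.V} {p : List G.E} (h : G.Path a b p) {e : G.E}
    (he : e ∈ p) :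
    ∃ s1 s2, p = s1 ++ e :: s2 ∧ G.Path a (G.ι e) s1 ∧ G.Path (G.τ e) b s2 := by
  induction h with
  | nil v => simp at he
  | cons f h ih =>
    rcases List.mem_cons.mp he with rfl | he'
    · exact ⟨[], _, rfl, Path.nil _, h⟩
    · obtain ⟨s1, s2, rfl, h1, h2⟩ := ih he'
      exact ⟨f :: s1, s2, rfl, Path.cons f h1, h2⟩

lemma Path.split_vert {a b : G.V} {p : List G.E} (h : G.Path a b p) {x : G.V}
    (hx : x ∈ G.verts a p) :
    ∃ s1 s2, p = s1 ++ s2 ∧ G.Path a x s1 ∧ G.Path x b s2 := by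
  induction h with
  | nil v =>
    simp [verts] at hx
    subst hx
    exact ⟨[], [], rfl, Path.nil _, Path.nil _⟩
  | cons f h ih =>
    rw [verts_cons] at hx
    rcases List.mem_cons.mp hx with rfl | hx'
    · exact ⟨[], _, rfl, Path.nil _, Path.cons f h⟩
    · obtain ⟨s1, s2, rfl, h1, h2⟩ := ih hx'
      exact ⟨f :: s1, s2, rfl, Path.cons f h1, h2⟩

lemma Path.reach_from_start {a b : G.V} {p : List G.E} (h : G.Path a b p)
    {x : G.V} (hx : x ∈ G.verts a p) : G.Reach a x := by
  obtain ⟨s1, s2, rfl, h1, h2⟩ := h.split_vert hx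
  exact ⟨s1, h1⟩

lemma Path.reach_of_mem_verts {a b : G.V} {p : List G.E} (h : G.Path a b p)
    {x : G.V} (hx : x ∈ G.verts a p) : G.Reach x b := by
  obtain ⟨s1, s2, rfl, h1, h2⟩ := h.split_vert hx
  exact ⟨s2, h2⟩

lemma Path.ι_mem_verts {a b : G.V} {p : List G.E} (h : G.Path a b p) {e : G.E}
    (he : e ∈ p) : G.ι e ∈ G.verts a p := by
  obtain ⟨s1, s2, rfl, h1, h2⟩ := h.split_edge he
  rw [verts_append]
  exact List.mem_append_left _ h1.end_mem_verts

lemma Path.verts_comparable {a b : G.V} {p : List G.E} (h : G.Path a b p)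
    {x y : G.V} (hx : x ∈ G.verts a p) (hy : y ∈ G.verts a p) :
    G.Reach x y ∨ G.Reach y x := by
  obtain ⟨s1, s2, rfl, h1, h2⟩ := h.split_vert hx
  rw [verts_append] at hy
  rcases List.mem_append.mp hy with hy1 | hy2
  · exact Or.inr (h1.reach_of_mem_verts hy1)
  · exact Or.inl (h2.reach_from_start (List.mem_cons_of_mem _ hy2))

/-- Extraction of a simple path from a path, using only edges of the path. -/
lemma exists_simple : ∀ (n : ℕ) (u b : G.V) (p : List G.E), p.length ≤ n →
    G.Path u b p →
    ∃ q, G.SimplePath u b q ∧ q.length ≤ p.length ∧ ∀ e ∈ q, e ∈ p := by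
  intro n
  induction n with
  | zero =>
    intro u b p hl h
    have : p = [] := List.length_eq_zero_iff.mp (Nat.le_zero.mp hl)
    subst this
    cases h
    exact ⟨[], ⟨Path.nil u, by simp [verts]⟩, by simp, by simp⟩
  | succ n ih =>
    intro u b p hl h
    cases h with
    | nil => exact ⟨[], ⟨Path.nil _, by simp [verts]⟩, by simp, by simp⟩
    | cons e h' =>
      rename_i p'
      have hl' : p'.length ≤ n := by simpa using hl
      obtain ⟨q', hq', hlen', hsub'⟩ := ih (G.τ e) b p' hl' h'
      by_cases hu : G.ι e ∈ G.verts (G.τ e) q'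
      · obtain ⟨s1, s2, rfl, h1, h2⟩ := hq'.1.split_vert hu
        have hs2 : s2.length ≤ n := by
          have : s2.length ≤ (s1 ++ s2).length := by simp
          omega
        obtain ⟨q, hq, hlen, hsub⟩ := ih (G.ι e) b s2 hs2 h2
        refine ⟨q, hq, ?_, fun x hx => ?_⟩
        · simp only [List.length_cons]
          have : s2.length ≤ (s1 ++ s2).length := by simp
          omega
        · exact List.mem_cons_of_mem _ (hsub' x (List.mem_append_right _ (hsub x hx)))
      · refine ⟨e :: q', ⟨Path.cons e hq'.1, ?_⟩, by simpa using hlen', ?_⟩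
        · rw [verts_cons]
          exact List.Nodup.cons hu hq'.2
        · intro x hx
          rcases List.mem_cons.mp hx with rfl | hx'
          · exact List.mem_cons_self
          · exact List.mem_cons_of_mem _ (hsub' x hx')

end DGraph


namespace DGraph

/-- Reachability inside the full subgraph induced by the vertex set `S`. -/
def ReachIn (G : DGraph) (S : Set G.V) (a b : G.V) : Prop :=
  ∃ p : List G.E, G.Path a b p ∧ ∀ e ∈ p, G.ι e ∈ S ∧ G.τ e ∈ S

/-- Let `(Γ, v)` have the unique simple path property and let `w` be a vertex.
Then the full subgraph `w↑` on the vertices from which `w` is reachable is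
rooted at `v` with the unique simple path property, is quasilinear (any two of
its vertices are comparable for reachability within `w↑`), and is linear (its
transition edges form a chain). -/
theorem up_subgraph_linear (G : DGraph) (v : G.V) (hroot : G.Rooted v)
    (huspp : ∀ u : G.V, ∃! p : List G.E, G.SimplePath v u p) (w : G.V) :
    (∀ u ∈ {q : G.V | G.Reach q w},
        ∃! p : List G.E, G.SimplePath v u p ∧
          ∀ e ∈ p, G.ι e ∈ {q : G.V | G.Reach q w} ∧
            G.τ e ∈ {q : G.V | G.Reach q w}) ∧
      (∀ a ∈ {q : G.V | G.Reach q w}, ∀ b ∈ {q : G.V | G.Reach q w},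
        G.ReachIn {q : G.V | G.Reach q w} a b ∨
          G.ReachIn {q : G.V | G.Reach q w} b a) ∧
      (∀ e f : G.E,
        G.ι e ∈ {q : G.V | G.Reach q w} → G.τ e ∈ {q : G.V | G.Reach q w} →
        G.ι f ∈ {q : G.V | G.Reach q w} → G.τ f ∈ {q : G.V | G.Reach q w} →
        ¬ G.ReachIn {q : G.V | G.Reach q w} (G.τ e) (G.ι e) →
        ¬ G.ReachIn {q : G.V | G.Reach q w} (G.τ f) (G.ι f) →
        e = f ∨ G.ReachIn {q : G.V | G.Reach q w} (G.τ e) (G.ι f) ∨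
          G.ReachIn {q : G.V | G.Reach q w} (G.τ f) (G.ι e)) := by
  classical
  choose sp hsp hup using huspp
  set S : Set G.V := {q : G.V | G.Reach q w} with hSdef
  have memS_of : ∀ {a b : G.V} {p : List G.E}, G.Path a b p → b ∈ S →
      ∀ e ∈ p, G.ι e ∈ S ∧ G.τ e ∈ S := by
    intro a b p hp hb e he
    obtain ⟨s1, s2, rfl, h1, h2⟩ := hp.split_edge he
    obtain ⟨q, hq⟩ := hb
    exact ⟨⟨(e :: s2) ++ q, (Path.cons e h2).append hq⟩, ⟨s2 ++ q, h2.append hq⟩⟩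
  have reachIn_iff : ∀ {a b : G.V}, b ∈ S → (G.ReachIn S a b ↔ G.Reach a b) := by
    intro a b hb
    constructor
    · rintro ⟨p, hp, -⟩; exact ⟨p, hp⟩
    · rintro ⟨p, hp⟩; exact ⟨p, hp, memS_of hp hb⟩
  have ext_simple : ∀ e : G.E, G.τ e ∉ G.verts v (sp (G.ι e)) →
      sp (G.τ e) = sp (G.ι e) ++ [e] := by
    intro e hte
    refine (hup _ _ ⟨(hsp (G.ι e)).1.append (Path.cons e (Path.nil _)), ?_⟩).symm
    rw [verts_append]
    simp only [List.map_cons, List.map_nil]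
    simp [List.nodup_append, hte]
    exact ⟨(hsp (G.ι e)).2, fun a ha h => hte (h ▸ ha)⟩
  have bridge : ∀ e : G.E, ¬ G.Reach (G.τ e) (G.ι e) →
      ∀ P : List G.E, G.Path v (G.τ e) P → e ∈ P := by
    intro e hne P hP
    have hte : G.τ e ∉ G.verts v (sp (G.ι e)) := fun h =>
      hne ((hsp (G.ι e)).1.reach_of_mem_verts h)
    obtain ⟨q, hq, -, hsub⟩ := exists_simple P.length v (G.τ e) P le_rfl hP
    have hqe : q = sp (G.ι e) ++ [e] := (hup _ _ hq).trans (ext_simple e hte)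
    exact hsub e (by simp [hqe])
  have M : ∀ (u y : G.V) (p : List G.E), G.Path y u p →
      ∃ c ∈ G.verts v (sp u), G.Reach y c ∧ G.Reach c y := by
    intro u y p hp
    induction hp with
    | nil z => exact ⟨z, (hsp z).1.end_mem_verts, Reach.refl z, Reach.refl z⟩
    | cons e h ih =>
      obtain ⟨c, hc, h1, h2⟩ := ih
      by_cases hte : G.τ e ∈ G.verts v (sp (G.ι e))
      · have hr : G.Reach (G.τ e) (G.ι e) := (hsp _).1.reach_of_mem_verts hte
        exact ⟨c, hc, (reach_edge e).trans h1, h2.trans hr⟩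
      · have heq := ext_simple e hte
        obtain ⟨p1, p2, hps, hp1, -⟩ := (hsp _).1.split_vert hc
        obtain ⟨r, hr⟩ := h2
        have hw : G.Path v (G.τ e) (p1 ++ r) := hp1.append hr
        obtain ⟨q, hq, -, hsub⟩ := exists_simple _ _ _ _ le_rfl hw
        have hqe : q = sp (G.ι e) ++ [e] := (hup _ _ hq).trans heq
        have he_mem : e ∈ p1 ++ r := hsub e (by simp [hqe])
        rcases List.mem_append.mp he_mem with h5 | h5
        · refine ⟨G.ι e, ?_, Reach.refl _, Reach.refl _⟩
          have hι : G.ι e ∈ G.verts v p1 := hp1.ι_mem_verts h5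
          rw [hps, verts_append]
          exact List.mem_append_left _ hι
        · obtain ⟨s1, s2, -, hc1, -⟩ := hr.split_edge h5
          exact ⟨c, hc, (reach_edge e).trans h1, ⟨s1, hc1⟩⟩
  have comp : ∀ a ∈ S, ∀ b ∈ S, G.Reach a b ∨ G.Reach b a := by
    intro a ha b hb
    obtain ⟨pa, hpa⟩ := ha
    obtain ⟨pb, hpb⟩ := hb
    obtain ⟨ca, hca, ha1, ha2⟩ := M w a pa hpa
    obtain ⟨cb, hcb, hb1, hb2⟩ := M w b pb hpb
    rcases (hsp w).1.verts_comparable hca hcb with h | h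
    · exact Or.inl (ha1.trans (h.trans hb2))
    · exact Or.inr (hb1.trans (h.trans ha2))
  refine ⟨?_, ?_, ?_⟩
  · intro u hu
    exact ⟨sp u, ⟨hsp u, memS_of (hsp u).1 hu⟩, fun q hq => hup u q hq.1⟩
  · intro a ha b hb
    rcases comp a ha b hb with h | h
    · exact Or.inl ((reachIn_iff hb).2 h)
    · exact Or.inr ((reachIn_iff ha).2 h)
  · intro e f hιe hτe hιf hτf hne hnf
    have hne' : ¬ G.Reach (G.τ e) (G.ι e) := fun h => hne ((reachIn_iff hιe).2 h)
    have hnf' : ¬ G.Reach (G.τ f) (G.ι f) := fun h => hnf ((reachIn_iff hιf).2 h)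
    by_contra hcon
    push_neg at hcon
    obtain ⟨hef, hc1, hc2⟩ := hcon
    have h1 : ¬ G.Reach (G.τ e) (G.ι f) := fun h => hc1 ((reachIn_iff hιf).2 h)
    have h2 : ¬ G.Reach (G.τ f) (G.ι e) := fun h => hc2 ((reachIn_iff hιe).2 h)
    rcases comp _ hτe _ hτf with h | h
    · obtain ⟨s, hs⟩ := h
      have hP : G.Path v (G.τ f) (sp (G.ι e) ++ e :: s) :=
        (hsp _).1.append (Path.cons e hs)
      have hfP := bridge f hnf' _ hP
      rcases List.mem_append.mp hfP with h5 | h5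
      · obtain ⟨-, s2, -, -, h6⟩ := (hsp (G.ι e)).1.split_edge h5
        exact h2 ⟨s2, h6⟩
      · rcases List.mem_cons.mp h5 with h6 | h6
        · exact hef h6.symm
        · obtain ⟨s1, -, -, h7, -⟩ := hs.split_edge h6
          exact h1 ⟨s1, h7⟩
    · obtain ⟨s, hs⟩ := h
      have hP : G.Path v (G.τ e) (sp (G.ι f) ++ f :: s) :=
        (hsp _).1.append (Path.cons f hs)
      have heP := bridge e hne' _ hP
      rcases List.mem_append.mp heP with h5 | h5
      · obtain ⟨-, s2, -, -, h6⟩ := (hsp (G.ι f)).1.split_edge h5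
        exact h1 ⟨s2, h6⟩
      · rcases List.mem_cons.mp h5 with h6 | h6
        · exact hef h6
        · obtain ⟨s1, -, -, h7, -⟩ := hs.split_edge h6
          exact h2 ⟨s1, h7⟩


end DGraph
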